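/- (Merris' Theorem) For any threshold graph G on n vertices, the characteristic polynomial of the Laplacian matrix of G equals ∏_{i=1}^{n} (X − |{v ∈ V : deg(v) ≥ i}|); equivalently, the eigenvalues of the Laplacian of G, listed in nonincreasing order λ_1 ≥ λ_2 ≥ ⋯ ≥ λ_n, satisfy λ_i = |{v ∈ V : deg(v) ≥ i}| for each i = 1, 2, …, n. -/

import Mathlib

/-- A graph is a threshold graph if there are vertex weights `φ` and a threshold `α`
such that two distinct vertices are adjacent iff the sum of their weights is at least `α`. -/
def IsThreshold {V : Type*} (G : SimpleGraph V) : Prop :=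
  ∃ (φ : V → ℝ) (α : ℝ), ∀ u v : V, u ≠ v → (G.Adj u v ↔ α ≤ φ u + φ v)

open Polynomial Matrix Finset

namespace MerrisAux
variable {R : Type*} [CommRing R]


variable {R : Type*} [CommRing R]

lemma charmatrix_submatrix_succ {k : ℕ} (M : Matrix (Fin (k+1)) (Fin (k+1)) R) :
    (charmatrix M).submatrix Fin.succ Fin.succ = charmatrix (M.submatrix Fin.succ Fin.succ) := by
  ext i j
  by_cases h : i = j
  · subst h; simp [charmatrix_apply_eq]
  · rw [submatrix_apply, charmatrix_apply_ne _ _ _ (fun hc => h (Fin.succ_injective _ hc)),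
      charmatrix_apply_ne _ _ _ h, submatrix_apply]

lemma charpoly_col_zero {k : ℕ} (M : Matrix (Fin (k+1)) (Fin (k+1)) R)
    (h : ∀ i, i ≠ 0 → M i 0 = 0) :
    M.charpoly = (X - C (M 0 0)) * (M.submatrix Fin.succ Fin.succ).charpoly := by
  rw [Matrix.charpoly, det_succ_column_zero, Fintype.sum_eq_single 0]
  · rw [charmatrix_apply_eq, Fin.succAbove_zero, charmatrix_submatrix_succ]
    simp [Matrix.charpoly]
  · intro i hi
    rw [charmatrix_apply_ne _ _ _ hi, h i hi]
    simp

lemma charpoly_conj {k : ℕ} (T T' M : Matrix (Fin k) (Fin k) R)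
    (h1 : T * T' = 1) (h2 : T' * T = 1) :
    (T' * M * T).charpoly = M.charpoly := by
  have hone : T'.map C * T.map C = 1 := by
    rw [← Matrix.map_mul, h2, Matrix.map_one _ (map_zero C) (map_one C)]
  have key : charmatrix (T' * M * T) = T'.map C * charmatrix M * T.map C := by
    have hsc := Matrix.scalar_commute (n := Fin k) (X : R[X]) (fun r' => Commute.all _ _)
    have h3 : T'.map ⇑(C : R →+* R[X]) * Matrix.scalar (Fin k) X * T.map ⇑(C : R →+* R[X]) = Matrix.scalar (Fin k) X := by
      rw [mul_assoc, (hsc (T.map C)).eq, ← mul_assoc, hone, one_mul]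
    unfold charmatrix
    rw [mul_sub, sub_mul, RingHom.mapMatrix_apply, RingHom.mapMatrix_apply,
      ← Matrix.map_mul, ← Matrix.map_mul, h3]
  rw [Matrix.charpoly, Matrix.charpoly, key, det_mul, det_mul]
  calc (T'.map C).det * (charmatrix M).det * (T.map C).det
      = ((T'.map C * T.map C)).det * (charmatrix M).det := by rw [det_mul]; ring
    _ = (charmatrix M).det := by rw [hone, det_one, one_mul]







lemma charpoly_add_one {k : ℕ} (A : Matrix (Fin k) (Fin k) R) :
    (A + 1).charpoly = A.charpoly.comp (X - 1) := by
  have : A.charpoly.comp (X - 1) = eval₂RingHom C (X - 1) A.charpoly := rfl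
  rw [this, Matrix.charpoly, Matrix.charpoly, RingHom.map_det]
  congr 1
  rw [RingHom.mapMatrix_apply]
  refine Matrix.ext fun i j => ?_
  by_cases h : i = j
  · subst h
    rw [Matrix.map_apply, charmatrix_apply_eq, charmatrix_apply_eq]
    simp [Matrix.add_apply, Matrix.one_apply, C_add]
    ring
  · rw [Matrix.map_apply, charmatrix_apply_ne _ _ _ h, charmatrix_apply_ne _ _ _ h]
    simp [Matrix.add_apply, Matrix.one_apply_ne h]

/-- first column of basis change: all ones; other columns: standard basis. -/
def T (k : ℕ) : Matrix (Fin (k+1)) (Fin (k+1)) R :=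
  Matrix.of fun i j => if j = 0 then 1 else if i = j then 1 else 0

def T' (k : ℕ) : Matrix (Fin (k+1)) (Fin (k+1)) R :=
  Matrix.of fun i j => if j = 0 then (if i = 0 then 1 else -1) else if i = j then 1 else 0

lemma T_mul_T' (k : ℕ) : (T k : Matrix _ _ R) * T' k = 1 := by
  ext i j
  rw [Matrix.mul_apply, Fin.sum_univ_succ]
  refine Fin.cases ?_ (fun j' => ?_) j
  · refine Fin.cases ?_ (fun i' => ?_) i <;>
      simp [T, T', Fin.succ_ne_zero, Matrix.one_apply, (Fin.succ_ne_zero _).symm,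
        Finset.sum_ite_eq, eq_comm]
  · refine Fin.cases ?_ (fun i' => ?_) i <;>
      simp [T, T', Fin.succ_ne_zero, (Fin.succ_ne_zero _).symm, Matrix.one_apply,
        Fin.succ_inj, Finset.sum_ite_eq, eq_comm]

lemma T'_mul_T (k : ℕ) : (T' k : Matrix _ _ R) * T k = 1 := by
  ext i j
  rw [Matrix.mul_apply, Fin.sum_univ_succ]
  refine Fin.cases ?_ (fun j' => ?_) j
  · refine Fin.cases ?_ (fun i' => ?_) i <;>
      simp [T, T', Fin.succ_ne_zero, Matrix.one_apply, (Fin.succ_ne_zero _).symm,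
        Finset.sum_ite_eq, eq_comm]
  · refine Fin.cases ?_ (fun i' => ?_) i <;>
      simp [T, T', Fin.succ_ne_zero, (Fin.succ_ne_zero _).symm, Matrix.one_apply,
        Fin.succ_inj, Finset.sum_ite_eq, eq_comm]





lemma TB_apply {k : ℕ} (B : Matrix (Fin (k+1)) (Fin (k+1)) R) (i j : Fin (k+1)) :
    ((T' k * B : Matrix (Fin (k+1)) (Fin (k+1)) R)) i j = if i = 0 then B 0 j else B i j - B 0 j := by
  rw [Matrix.mul_apply, Fin.sum_univ_succ]
  refine Fin.cases ?_ (fun i' => ?_) i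
  · simp [T', (Fin.succ_ne_zero _).symm, Fin.succ_ne_zero]
  · simp [T', (Fin.succ_ne_zero _).symm, Fin.succ_ne_zero, Fin.succ_inj,
      Finset.sum_ite_eq, sub_eq_neg_add]

lemma BT_apply_zero {k : ℕ} (N : Matrix (Fin (k+1)) (Fin (k+1)) R) (i : Fin (k+1)) :
    ((N * T k : Matrix (Fin (k+1)) (Fin (k+1)) R)) i 0 = ∑ m, N i m := by
  rw [Matrix.mul_apply]
  simp [T]

lemma BT_apply_succ {k : ℕ} (N : Matrix (Fin (k+1)) (Fin (k+1)) R) (i : Fin (k+1)) (j : Fin k) :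
    ((N * T k : Matrix (Fin (k+1)) (Fin (k+1)) R)) i j.succ = N i j.succ := by
  rw [Matrix.mul_apply]
  simp [T, (Fin.succ_ne_zero _).symm, Fin.succ_ne_zero, Finset.sum_ite_eq', eq_comm]

lemma conj_charpoly {k : ℕ} (B : Matrix (Fin (k+1)) (Fin (k+1)) R)
    (hrow : ∀ i i' : Fin (k+1), ∑ j, B i j = ∑ j, B i' j) :
    B.charpoly = (X - C (∑ j, B 0 j)) *
      (Matrix.of fun i j : Fin k => B i.succ j.succ - B 0 j.succ).charpoly := by
  have hc := charpoly_conj (T k) (T' k) B (T_mul_T' k) (T'_mul_T k)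
  rw [← hc, charpoly_col_zero]
  · congr 2
    · rw [BT_apply_zero]
      congr 1
      refine Finset.sum_congr rfl fun m _ => ?_
      rw [TB_apply]
      simp
    · refine Matrix.ext fun i j => ?_
      rw [Matrix.submatrix_apply, BT_apply_succ, TB_apply]
      simp [Fin.succ_ne_zero]
  · intro i hi
    obtain ⟨i', rfl⟩ := Fin.exists_succ_eq.2 hi
    rw [BT_apply_zero]
    rw [Finset.sum_congr rfl fun m _ => TB_apply B i'.succ m]
    simp [Fin.succ_ne_zero, Finset.sum_sub_distrib, hrow i'.succ 0]


lemma key_zero {k : ℕ} (L : Matrix (Fin (k+1)) (Fin (k+1)) R) (hrow : ∀ i, ∑ j, L i j = 0) :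
    L.charpoly = X * (Matrix.of fun i j : Fin k => L i.succ j.succ - L 0 j.succ).charpoly := by
  have h := conj_charpoly L (fun i i' => by rw [hrow, hrow])
  rwa [hrow, map_zero, sub_zero] at h

lemma key_J {k : ℕ} (L : Matrix (Fin (k+1)) (Fin (k+1)) R) (hrow : ∀ i, ∑ j, L i j = 0) :
    (L + Matrix.of fun _ _ => (1:R)).charpoly =
      (X - C ((k+1 : ℕ) : R)) *
        (Matrix.of fun i j : Fin k => L i.succ j.succ - L 0 j.succ).charpoly := by
  have hsum : ∀ i, ∑ j, ((L + Matrix.of fun _ _ => (1:R) : Matrix (Fin (k+1)) (Fin (k+1)) R)) i j = ((k+1 : ℕ) : R) := by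
    intro i
    simp [Matrix.add_apply, Finset.sum_add_distrib, hrow i]
  have h := conj_charpoly (L + Matrix.of fun _ _ => (1:R)) (fun i i' => by rw [hsum, hsum])
  have hDeq : (Matrix.of fun i j : Fin k =>
        ((L + Matrix.of fun _ _ => (1:R) : Matrix (Fin (k+1)) (Fin (k+1)) R)) i.succ j.succ -
          ((L + Matrix.of fun _ _ => (1:R) : Matrix (Fin (k+1)) (Fin (k+1)) R)) 0 j.succ) =
      Matrix.of fun i j : Fin k => L i.succ j.succ - L 0 j.succ :=
    Matrix.ext fun i j => by simp [Matrix.add_apply]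
  rw [h, hsum, hDeq]

section Graph

instance comapDecidable {V W : Type*} (G : SimpleGraph W) [h : DecidableRel G.Adj] (f : V → W) :
    DecidableRel (G.comap f).Adj := fun a b => h (f a) (f b)

lemma isThreshold_comap {V W : Type*} (G : SimpleGraph W) (hG : IsThreshold G)
    (f : V → W) (hf : Function.Injective f) : IsThreshold (G.comap f) := by
  obtain ⟨φ, α, hφ⟩ := hG
  exact ⟨φ ∘ f, α, fun u v huv => hφ (f u) (f v) (fun hc => huv (hf hc))⟩

lemma exists_iso_dom {n : ℕ} (G : SimpleGraph (Fin (n+1))) (hG : IsThreshold G) :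
    ∃ v, (∀ u, ¬ G.Adj v u) ∨ (∀ u, u ≠ v → G.Adj v u) := by
  obtain ⟨φ, α, hφ⟩ := hG
  obtain ⟨u, -, hu⟩ := Finset.exists_max_image Finset.univ φ ⟨0, Finset.mem_univ 0⟩
  obtain ⟨w, -, hw⟩ := Finset.exists_min_image Finset.univ φ ⟨0, Finset.mem_univ 0⟩
  by_cases hα : α ≤ φ u + φ w
  · refine ⟨u, Or.inr fun x hx => ?_⟩
    exact (hφ u x (Ne.symm hx)).mpr (le_trans hα (by
      have := hw x (Finset.mem_univ x); linarith))
  · refine ⟨w, Or.inl fun x => ?_⟩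
    by_cases hxw : x = w
    · subst hxw; exact G.irrefl
    · intro hadj
      have h2 := (hφ w x (Ne.symm hxw)).mp hadj
      have := hu x (Finset.mem_univ x)
      push_neg at hα
      linarith

variable {m : ℕ} (G : SimpleGraph (Fin m)) [DecidableRel G.Adj]

lemma degree_eq_sum (v : Fin m) :
    G.degree v = ∑ u, if G.Adj v u then 1 else 0 := by
  rw [← SimpleGraph.card_neighborFinset_eq_degree, SimpleGraph.neighborFinset_eq_filter,
    Finset.card_filter]

lemma lap_apply (i j : Fin m) :
    G.lapMatrix ℝ i j = (if i = j then (G.degree i : ℝ) else 0) - (if G.Adj i j then 1 else 0) := by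
  rw [SimpleGraph.lapMatrix, Matrix.sub_apply, SimpleGraph.degMatrix, SimpleGraph.adjMatrix_apply,
    Matrix.diagonal_apply]

lemma lap_row_sum (i : Fin m) : ∑ j, G.lapMatrix ℝ i j = 0 := by
  have h := congrFun (SimpleGraph.lapMatrix_mulVec_const_eq_zero G (R := ℝ)) i
  simpa [Matrix.mulVec, dotProduct] using h

def cnt (i : ℕ) : ℕ := #(Finset.univ.filter fun v => i ≤ G.degree v)

lemma cnt_eq_sum (i : ℕ) : cnt G i = ∑ v, if i ≤ G.degree v then 1 else 0 := by
  rw [cnt, Finset.card_filter]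

lemma cnt_card : cnt G m = 0 := by
  rw [cnt, Finset.card_eq_zero, Finset.filter_eq_empty_iff]
  intro v _
  have := G.degree_lt_card_verts v
  rw [Fintype.card_fin] at this
  omega

end Graph

section GraphSucc

variable {n : ℕ} (G : SimpleGraph (Fin (n+1))) [DecidableRel G.Adj]

lemma degree_zero_eq : G.degree 0 = ∑ w : Fin n, (if G.Adj 0 w.succ then 1 else 0) := by
  rw [degree_eq_sum, Fin.sum_univ_succ]
  simp

lemma degree_succ_eq (w : Fin n) :
    G.degree w.succ = (if G.Adj w.succ 0 then 1 else 0) + (G.comap Fin.succ).degree w := by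
  rw [degree_eq_sum, Fin.sum_univ_succ, degree_eq_sum]
  simp

lemma cnt_split (i : ℕ) :
    cnt G i = (if i ≤ G.degree 0 then 1 else 0)
      + ∑ w : Fin n, (if i ≤ G.degree w.succ then 1 else 0) := by
  rw [cnt_eq_sum, Fin.sum_univ_succ]

end GraphSucc

section Relabel

variable {m : ℕ} (G : SimpleGraph (Fin m)) [DecidableRel G.Adj] (e : Fin m ≃ Fin m)

lemma degree_comap_equiv (v : Fin m) : (G.comap ⇑e).degree v = G.degree (e v) := by
  rw [degree_eq_sum, degree_eq_sum]
  exact Fintype.sum_equiv e _ _ (fun u => by simp)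

lemma lap_comap_equiv : (G.comap ⇑e).lapMatrix ℝ = (G.lapMatrix ℝ).submatrix ⇑e ⇑e := by
  refine Matrix.ext fun i j => ?_
  rw [Matrix.submatrix_apply, lap_apply, lap_apply, degree_comap_equiv]
  simp [EmbeddingLike.apply_eq_iff_eq]

lemma charpoly_comap_equiv :
    ((G.comap ⇑e).lapMatrix ℝ).charpoly = (G.lapMatrix ℝ).charpoly := by
  rw [lap_comap_equiv]
  have : (G.lapMatrix ℝ).submatrix ⇑e ⇑e = Matrix.reindex e.symm e.symm (G.lapMatrix ℝ) := by
    simp [Matrix.reindex_apply]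
  rw [this, Matrix.charpoly_reindex]

lemma cnt_comap_equiv (i : ℕ) : cnt (G.comap ⇑e) i = cnt G i := by
  rw [cnt_eq_sum, cnt_eq_sum]
  exact Fintype.sum_equiv e _ _ (fun v => by rw [degree_comap_equiv])

end Relabel

lemma Icc_prod_range (m : ℕ) (f : ℕ → Polynomial ℝ) :
    ∏ i ∈ Finset.Icc 1 m, f i = ∏ j ∈ Finset.range m, f (j+1) := by
  rw [← Finset.Ico_add_one_right_eq_Icc, Finset.prod_Ico_eq_prod_range]
  simp [add_comm]

lemma step {n : ℕ} (G : SimpleGraph (Fin (n+1))) [inst : DecidableRel G.Adj]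
    (hG : IsThreshold G)
    (h0 : (∀ u, ¬ G.Adj 0 u) ∨ (∀ u, u ≠ 0 → G.Adj 0 u))
    (ih : ∀ (H : SimpleGraph (Fin n)) [instH : DecidableRel H.Adj], IsThreshold H →
      (H.lapMatrix ℝ).charpoly
        = ∏ j ∈ Finset.range n, (X - C ((cnt H (j+1) : ℝ)))) :
    (G.lapMatrix ℝ).charpoly
      = ∏ j ∈ Finset.range (n+1), (X - C ((cnt G (j+1) : ℝ))) := by
  have hHthr : IsThreshold (G.comap (Fin.succ : Fin n → Fin (n+1))) :=
    isThreshold_comap G hG _ (Fin.succ_injective n)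
  have hkey := key_zero (G.lapMatrix ℝ) (lap_row_sum G)
  rcases h0 with h | h
  · -- isolated vertex 0
    have hadj0 : ∀ w : Fin n, ¬ G.Adj w.succ 0 := fun w hc => h _ hc.symm
    have hdeg0 : G.degree 0 = 0 := by rw [degree_zero_eq]; simp [h]
    have hdegs : ∀ w, G.degree w.succ = (G.comap (Fin.succ : Fin n → Fin (n+1))).degree w :=
      fun w => by rw [degree_succ_eq]; simp [hadj0 w]
    have hD : (Matrix.of fun i j : Fin n =>
          G.lapMatrix ℝ i.succ j.succ - G.lapMatrix ℝ 0 j.succ)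
        = (G.comap (Fin.succ : Fin n → Fin (n+1))).lapMatrix ℝ := by
      refine Matrix.ext fun i j => ?_
      rw [Matrix.of_apply, lap_apply, lap_apply, lap_apply]
      have h1 : ¬ (0 : Fin (n+1)) = j.succ := fun hc => (Fin.succ_ne_zero j) hc.symm
      simp [h1, h j.succ, Fin.succ_inj, hdegs i]
    have hcnt : ∀ j : ℕ, cnt G (j+1) = cnt (G.comap (Fin.succ : Fin n → Fin (n+1))) (j+1) := by
      intro j
      rw [cnt_split, cnt_eq_sum, hdeg0, if_neg (by omega)]
      simp [hdegs]
    rw [hkey, hD, ih _ hHthr, Finset.prod_range_succ, cnt_card]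
    simp only [Nat.cast_zero, map_zero, sub_zero]
    rw [mul_comm]
    congr 1
    exact Finset.prod_congr rfl fun j _ => by rw [hcnt j]
  · -- dominating vertex 0
    rcases n with _ | k
    · rw [hkey]
      have hemp : (Matrix.of fun i j : Fin 0 =>
          G.lapMatrix ℝ i.succ j.succ - G.lapMatrix ℝ 0 j.succ).charpoly = 1 := by
        rw [Matrix.charpoly, Matrix.det_isEmpty]
      rw [hemp, Finset.prod_range_one, cnt_card]
      simp
    · have hadj0 : ∀ w : Fin (k+1), G.Adj w.succ 0 :=
        fun w => (h w.succ (Fin.succ_ne_zero w)).symm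
      have hdegs : ∀ w : Fin (k+1), G.degree w.succ
          = 1 + (G.comap (Fin.succ : Fin (k+1) → Fin (k+2))).degree w :=
        fun w => by rw [degree_succ_eq]; simp [hadj0 w]
      have hdeg0 : G.degree 0 = k+1 := by
        rw [degree_zero_eq]
        simp [fun w : Fin (k+1) => h w.succ (Fin.succ_ne_zero w)]
      have hD : (Matrix.of fun i j : Fin (k+1) =>
            G.lapMatrix ℝ i.succ j.succ - G.lapMatrix ℝ 0 j.succ)
          = ((G.comap (Fin.succ : Fin (k+1) → Fin (k+2))).lapMatrix ℝ
              + Matrix.of fun _ _ => (1:ℝ)) + 1 := by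
        refine Matrix.ext fun i j => ?_
        rw [Matrix.of_apply, Matrix.add_apply, Matrix.add_apply, Matrix.of_apply,
          lap_apply, lap_apply, lap_apply]
        have h1 : ¬ (0 : Fin (k+2)) = j.succ := fun hc => (Fin.succ_ne_zero j) hc.symm
        by_cases hij : i = j
        · subst hij
          simp only [h1, if_false, if_pos rfl, Fin.succ_inj, Matrix.one_apply_eq,
            h i.succ (Fin.succ_ne_zero i), if_true, if_pos, hdegs i]
          rw [if_neg (G.irrefl ∘ SimpleGraph.comap_adj.mp ∘ id),
            if_neg (fun hc : G.Adj i.succ i.succ => G.irrefl hc)]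
          push_cast
          ring
        · have h2 : ¬ i.succ = j.succ := fun hc => hij (Fin.succ_injective _ hc)
          simp only [h1, h2, hij, if_false, Matrix.one_apply_ne hij,
            h j.succ (Fin.succ_ne_zero j), if_true]
          have hca : (G.comap (Fin.succ : Fin (k+1) → Fin (k+2))).Adj i j ↔ G.Adj i.succ j.succ :=
            SimpleGraph.comap_adj
          by_cases hadj : G.Adj i.succ j.succ
          · rw [if_pos hadj, if_pos (hca.mpr hadj)]; ring
          · rw [if_neg hadj, if_neg (fun hc => hadj (hca.mp hc))]; ring
      have hih := ih _ hHthr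
      rw [Finset.prod_range_succ, cnt_card] at hih
      simp only [Nat.cast_zero, map_zero, sub_zero] at hih
      have hkeyH := key_zero ((G.comap (Fin.succ : Fin (k+1) → Fin (k+2))).lapMatrix ℝ)
        (lap_row_sum _)
      have hq : (Matrix.of fun i j : Fin k =>
            (G.comap (Fin.succ : Fin (k+1) → Fin (k+2))).lapMatrix ℝ i.succ j.succ
              - (G.comap (Fin.succ : Fin (k+1) → Fin (k+2))).lapMatrix ℝ 0 j.succ).charpoly
          = ∏ j ∈ Finset.range k,
              (X - C ((cnt (G.comap (Fin.succ : Fin (k+1) → Fin (k+2))) (j+1) : ℝ))) := by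
        refine mul_left_cancel₀ (Polynomial.X_ne_zero (R := ℝ)) ?_
        rw [← hkeyH, hih]
        ring
      have hJ := key_J ((G.comap (Fin.succ : Fin (k+1) → Fin (k+2))).lapMatrix ℝ)
        (lap_row_sum _)
      rw [hkey, hD, charpoly_add_one, hJ, hq]
      have hc1 : cnt G 1 = k+2 := by
        rw [cnt_split, hdeg0, if_pos (by omega)]
        have h3 : ∀ w : Fin (k+1), (if 1 ≤ G.degree w.succ then 1 else 0) = 1 :=
          fun w => by rw [hdegs w]; simp
        rw [Finset.sum_congr rfl fun w _ => h3 w]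
        simp
        omega
      have hcmid : ∀ j : ℕ, j < k → cnt G (j+1+1)
          = 1 + cnt (G.comap (Fin.succ : Fin (k+1) → Fin (k+2))) (j+1) := by
        intro j hj
        rw [cnt_split, hdeg0, if_pos (by omega), cnt_eq_sum]
        congr 1
        refine Finset.sum_congr rfl fun w _ => ?_
        rw [hdegs w]
        exact if_congr (by omega) rfl rfl
      -- assemble
      have hmid : (∏ j ∈ Finset.range k, (X - C ((cnt G (j+1+1) : ℕ) : ℝ)))
          = ∏ j ∈ Finset.range k,
              (X - 1 - C ((cnt (G.comap (Fin.succ : Fin (k+1) → Fin (k+2))) (j+1) : ℕ) : ℝ)) :=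
        Finset.prod_congr rfl fun j hj => by
          rw [hcmid j (Finset.mem_range.mp hj)]
          push_cast
          rw [map_add, _root_.map_one]
          ring
      have hrhs : (∏ j ∈ Finset.range (k+1+1), (X - C ((cnt G (j+1) : ℕ) : ℝ)))
          = ((∏ j ∈ Finset.range k,
              (X - 1 - C ((cnt (G.comap (Fin.succ : Fin (k+1) → Fin (k+2))) (j+1) : ℕ) : ℝ)))
            * (X - C (((k+2 : ℕ)) : ℝ))) * X := by
        rw [Finset.prod_range_succ, Finset.prod_range_succ', cnt_card, hc1, hmid]
        simp
      have hlhs : ((X - C (((k+1 : ℕ)) : ℝ)) * ∏ j ∈ Finset.range k,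
            (X - C ((cnt (G.comap (Fin.succ : Fin (k+1) → Fin (k+2))) (j+1) : ℕ) : ℝ))).comp (X - 1)
          = (X - C (((k+2 : ℕ)) : ℝ)) * ∏ j ∈ Finset.range k,
              (X - 1 - C ((cnt (G.comap (Fin.succ : Fin (k+1) → Fin (k+2))) (j+1) : ℕ) : ℝ)) := by
        rw [Polynomial.mul_comp, Polynomial.sub_comp, Polynomial.X_comp, Polynomial.C_comp,
          Polynomial.prod_comp]
        congr 1
        · push_cast
          rw [map_add, _root_.map_one, map_add, map_ofNat]
          ring
        · exact Finset.prod_congr rfl fun j _ => by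
            rw [Polynomial.sub_comp, Polynomial.X_comp, Polynomial.C_comp]
      rw [hlhs, hrhs]
      ring

theorem merris_aux (n : ℕ) :
    ∀ (G : SimpleGraph (Fin n)) [inst : DecidableRel G.Adj], IsThreshold G →
      (G.lapMatrix ℝ).charpoly
        = ∏ j ∈ Finset.range n, (X - C ((cnt G (j+1) : ℝ))) := by
  induction n with
  | zero => intro G inst hG; simp [Matrix.charpoly, Matrix.det_isEmpty]
  | succ n ih =>
    intro G inst hG
    obtain ⟨v₀, hv₀⟩ := exists_iso_dom G hG
    have hthr2 : IsThreshold (G.comap ⇑(Equiv.swap (0 : Fin (n+1)) v₀)) :=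
      isThreshold_comap G hG _ (Equiv.injective _)
    have h0 : (∀ u, ¬ (G.comap ⇑(Equiv.swap (0 : Fin (n+1)) v₀)).Adj 0 u)
        ∨ (∀ u, u ≠ 0 → (G.comap ⇑(Equiv.swap (0 : Fin (n+1)) v₀)).Adj 0 u) := by
      rcases hv₀ with h | h
      · left
        intro u
        rw [SimpleGraph.comap_adj, Equiv.swap_apply_left]
        exact h _
      · right
        intro u hu
        rw [SimpleGraph.comap_adj, Equiv.swap_apply_left]
        refine h _ fun hc => hu ?_
        have : Equiv.swap (0 : Fin (n+1)) v₀ u = Equiv.swap (0 : Fin (n+1)) v₀ 0 := by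
          rw [Equiv.swap_apply_left, hc]
        exact (Equiv.swap _ _).injective this
    have hstep := step (G.comap ⇑(Equiv.swap (0 : Fin (n+1)) v₀)) hthr2 h0 ih
    rw [charpoly_comap_equiv] at hstep
    rw [hstep]
    exact Finset.prod_congr rfl fun j _ => by rw [cnt_comap_equiv]

end MerrisAux

/-- Merris' theorem: for a threshold graph `G` on `n` vertices, the characteristic
polynomial of its Laplacian matrix is `∏_{i=1}^{n} (X − |{v : deg v ≥ i}|)`; in
particular the Laplacian eigenvalues, in nonincreasing order, are
`λ_i = |{v : deg v ≥ i}|`. -/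
theorem merris (n : ℕ) (G : SimpleGraph (Fin n)) [DecidableRel G.Adj]
    (hG : IsThreshold G) :
    (G.lapMatrix ℝ).charpoly =
      ∏ i ∈ Finset.Icc 1 n,
        (Polynomial.X - Polynomial.C
          (((Finset.univ.filter fun v : Fin n => i ≤ G.degree v).card : ℝ))) := by
  rw [MerrisAux.Icc_prod_range]
  exact MerrisAux.merris_aux n G hG
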